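/- Let $1 < a < d$ be integers and for each $n \geq 0$ let $E_n = \bigcup_{i=0}^{n} [ia, id] \subseteq \mathbb{Z}$. Then for $n \geq 1$, $E_{n+1} = E_n + \{0, d\}$ (Minkowski sum) if and only if $n(d-a) \geq d-1$. -/
import Mathlib


open Pointwise

/-- Case A combinatorics: for `1 < a < d` and `E n = ⋃_{i=0}^n [ia, id]`,
one has `E (n+1) = E n + {0, d}` (Minkowski sum) iff `n(d-a) ≥ d-1`, for `n ≥ 1`. -/
theorem caseA_iff (a d : ℤ) (ha : 1 < a) (had : a < d)
    (E : ℕ → Set ℤ)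
    (hE : ∀ n, E n = ⋃ i ∈ Finset.range (n + 1), Set.Icc ((i : ℤ) * a) ((i : ℤ) * d)) :
    ∀ n : ℕ, 1 ≤ n →
      (E (n + 1) = E n + ({0, d} : Set ℤ) ↔ (n : ℤ) * (d - a) ≥ d - 1) := by
  have memE : ∀ m (x : ℤ), x ∈ E m ↔ ∃ i : ℕ, i ≤ m ∧ (i:ℤ)*a ≤ x ∧ x ≤ (i:ℤ)*d := by
    intro m x
    rw [hE]
    simp [Nat.lt_succ_iff]
    tauto
  have memS : ∀ m (x : ℤ), x ∈ E m + ({0, d} : Set ℤ) ↔ x ∈ E m ∨ x - d ∈ E m := by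
    intro m x
    constructor
    · rintro ⟨u, hu, v, hv, rfl⟩
      rcases hv with rfl | rfl
      · left; simpa using hu
      · right; simpa using hu
    · rintro (h | h)
      · exact ⟨x, h, 0, by simp, by simp⟩
      · exact ⟨x - d, h, d, by simp, by ring⟩
  intro n hn
  have hn' : (1:ℤ) ≤ (n:ℤ) := by exact_mod_cast hn
  constructor
  · intro heq
    by_contra hlt
    push_neg at hlt
    have hlt' : (n:ℤ)*d + 1 < (n:ℤ)*a + d := by nlinarith
    set x := max ((n:ℤ)*d + 1) (((n:ℤ)+1)*a) with hxdef
    have hx1 : (n:ℤ)*d + 1 ≤ x := le_max_left _ _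
    have hx2 : ((n:ℤ)+1)*a ≤ x := le_max_right _ _
    have hxE : x ∈ E (n+1) := by
      rw [memE]
      refine ⟨n+1, le_refl _, by push_cast; exact hx2, ?_⟩
      push_cast
      apply max_le
      · nlinarith
      · nlinarith
    rw [heq, memS] at hxE
    rcases hxE with h | h
    · rw [memE] at h
      obtain ⟨i, hi, h1, h2⟩ := h
      have hin : (i:ℤ) ≤ n := by exact_mod_cast hi
      nlinarith
    · rw [memE] at h
      obtain ⟨i, hi, h1, h2⟩ := h
      have hin : (i:ℤ) ≤ n := by exact_mod_cast hi
      rcases eq_or_lt_of_le hin with heq' | hlt2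
      · have hx_lt : x < (n:ℤ)*a + d := by
          apply max_lt
          · exact hlt'
          · nlinarith
        rw [heq'] at h1
        linarith
      · have : (i:ℤ) + 1 ≤ n := by exact_mod_cast hlt2
        nlinarith
  · intro hge
    apply Set.Subset.antisymm
    · intro x hx
      rw [memE] at hx
      obtain ⟨i, hi, h1, h2⟩ := hx
      rw [memS]
      by_cases hc : x ≤ (n:ℤ)*d
      · left; rw [memE]
        rcases le_or_gt i n with hin | hin
        · exact ⟨i, hin, h1, h2⟩
        · have hieq : i = n + 1 := by omega
          subst hieq
          refine ⟨n, le_refl _, ?_, hc⟩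
          push_cast at h1
          nlinarith
      · right; rw [memE]
        push_neg at hc
        have hin : (i:ℤ) ≤ (n:ℤ) + 1 := by exact_mod_cast hi
        refine ⟨n, le_refl _, by nlinarith, by nlinarith⟩
    · intro x hx
      rw [memS] at hx
      rw [memE]
      rcases hx with h | h
      · rw [memE] at h
        obtain ⟨i, hi, h1, h2⟩ := h
        exact ⟨i, by omega, h1, h2⟩
      · rw [memE] at h
        obtain ⟨i, hi, h1, h2⟩ := h
        have hin : (i:ℤ) ≤ n := by exact_mod_cast hi
        refine ⟨i+1, by omega, ?_, ?_⟩ <;> push_cast <;> nlinarith
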